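/- Let F be a field with involution and let f = f(X_1, …, X_n, X_1^*, …, X_n^*) ∈ F⟨X_1, …, X_n, X_1^*, …, X_n^*⟩ be linear in X_n, i.e., every monomial of f contains the letters X_n and X_n^* a total of exactly once. Then there exist g and g' in F⟨X_1, …, X_{n−1}, X_1^*, …, X_{n−1}^*⟩ (polynomials not involving X_n or X_n^*) such that f is cyclically equivalent to g·X_n + X_n^*·g'. -/

import Mathlib

open MonoidAlgebra FreeMonoid

instance mySumLawful {α β} [BEq α] [LawfulBEq α] [BEq β] [LawfulBEq β] :
    @LawfulBEq (α ⊕ β) Sum.instBEq where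
  eq_of_beq {a b} h := by
    cases a <;> cases b
    · exact congrArg Sum.inl (eq_of_beq h)
    · exact absurd h (by exact fun h => nomatch h)
    · exact absurd h (by exact fun h => nomatch h)
    · exact congrArg Sum.inr (eq_of_beq h)
  rfl {a} := by
    cases a
    case inl a => exact (beq_self_eq_true a : _)
    case inr a => exact (beq_self_eq_true a : _)

lemma sub_lemma {A : Type*} [AddCommGroup A] (s f a b c d : A) :
    (s + f) - ((a + b) + (c + d)) = (s - (a + c)) + (f - (b + d)) := by abel

lemma list_decomp {α : Type*} [BEq α] [LawfulBEq α] {x y : α} (hxy : x ≠ y) :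
    ∀ (l : List α), l.count x + l.count y = 1 →
    ∃ u ℓ v, l = u ++ ℓ :: v ∧ (ℓ = x ∨ ℓ = y) ∧ x ∉ u ∧ y ∉ u ∧ x ∉ v ∧ y ∉ v := by
  intro l
  induction l with
  | nil => simp
  | cons a l ih =>
    intro h
    by_cases hax : a = x
    · subst hax
      have hx : l.count a = 0 ∧ l.count y = 0 := by
        rw [List.count_cons_self, List.count_cons_of_ne hxy] at h
        omega
      exact ⟨[], a, l, rfl, Or.inl rfl, by simp, by simp,
        List.count_eq_zero.mp hx.1, List.count_eq_zero.mp hx.2⟩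
    · by_cases hay : a = y
      · subst hay
        have hx : l.count x = 0 ∧ l.count a = 0 := by
          rw [List.count_cons_self, List.count_cons_of_ne (Ne.symm hxy)] at h
          omega
        exact ⟨[], a, l, rfl, Or.inr rfl, by simp, by simp,
          List.count_eq_zero.mp hx.1, List.count_eq_zero.mp hx.2⟩
      · rw [List.count_cons_of_ne hax,
          List.count_cons_of_ne hay] at h
        obtain ⟨u, ℓ, v, h1, h2, h3, h4, h5, h6⟩ := ih h
        refine ⟨a :: u, ℓ, v, by rw [h1]; rfl, h2, ?_, ?_, h5, h6⟩
        · intro hm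
          rcases List.mem_cons.mp hm with hm | hm
          exacts [hax hm.symm, h3 hm]
        · intro hm
          rcases List.mem_cons.mp hm with hm | hm
          exacts [hay hm.symm, h4 hm]

lemma single_case (F : Type*) [Field F] (n : ℕ)
    (w : FreeMonoid (Fin (n + 1) ⊕ Fin (n + 1))) (c : F)
    (hw : (FreeMonoid.toList w).count (Sum.inl (Fin.last n)) +
        (FreeMonoid.toList w).count (Sum.inr (Fin.last n)) = 1) :
    ∃ g g' : MonoidAlgebra F (FreeMonoid (Fin (n + 1) ⊕ Fin (n + 1))),
      (∀ w' ∈ g.coeff.support, Sum.inl (Fin.last n) ∉ FreeMonoid.toList w' ∧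
          Sum.inr (Fin.last n) ∉ FreeMonoid.toList w') ∧
      (∀ w' ∈ g'.coeff.support, Sum.inl (Fin.last n) ∉ FreeMonoid.toList w' ∧
          Sum.inr (Fin.last n) ∉ FreeMonoid.toList w') ∧
      MonoidAlgebra.single w c - (g * MonoidAlgebra.of F _
              (FreeMonoid.of (Sum.inl (Fin.last n))) +
           MonoidAlgebra.of F _ (FreeMonoid.of (Sum.inr (Fin.last n))) * g')
        ∈ AddSubgroup.closure
            {x : MonoidAlgebra F (FreeMonoid (Fin (n + 1) ⊕ Fin (n + 1))) |
              ∃ p q, x = p * q - q * p} := by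
  obtain ⟨u, ℓ, v, h1, h2, h3, h4, h5, h6⟩ :=
    list_decomp (Sum.inl_ne_inr) (FreeMonoid.toList w) hw
  have hw' : w = ofList (u ++ ℓ :: v) := by
    rw [← h1, ofList_toList]
  rcases h2 with h2 | h2
  · -- ℓ = X_n
    subst h2
    refine ⟨MonoidAlgebra.single (ofList (v ++ u)) c, 0, ?_, by simp, ?_⟩
    · intro w' hw'
      have := Finsupp.support_single_subset hw'
      simp only [Finset.mem_singleton] at this
      subst this
      simp only [toList_ofList, List.mem_append]
      exact ⟨fun h => h.elim h5 h3, fun h => h.elim h6 h4⟩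
    · apply AddSubgroup.subset_closure
      refine ⟨MonoidAlgebra.single (ofList (u ++ [Sum.inl (Fin.last n)])) c,
        MonoidAlgebra.single (ofList v) 1, ?_⟩
      rw [mul_zero, add_zero, hw', MonoidAlgebra.of_apply,
        MonoidAlgebra.single_mul_single, MonoidAlgebra.single_mul_single,
        MonoidAlgebra.single_mul_single, mul_one, one_mul]
      congr 2
      · rw [← ofList_append]
        congr 1
        simp
      · rw [← ofList_singleton, ← ofList_append, ← ofList_append]
        exact congrArg ofList (by simp)
  · -- ℓ = X_n*
    subst h2
    refine ⟨0, MonoidAlgebra.single (ofList (v ++ u)) c, by simp, ?_, ?_⟩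
    · intro w' hw'
      have := Finsupp.support_single_subset hw'
      simp only [Finset.mem_singleton] at this
      subst this
      simp only [toList_ofList, List.mem_append]
      exact ⟨fun h => h.elim h5 h3, fun h => h.elim h6 h4⟩
    · apply AddSubgroup.subset_closure
      refine ⟨MonoidAlgebra.single (ofList u) c,
        MonoidAlgebra.single (ofList (Sum.inr (Fin.last n) :: v)) 1, ?_⟩
      rw [zero_mul, zero_add, hw', MonoidAlgebra.of_apply,
        MonoidAlgebra.single_mul_single, MonoidAlgebra.single_mul_single,
        MonoidAlgebra.single_mul_single, mul_one, one_mul]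
      rw [← ofList_append]
      congr 2

/-- **Lemma 4.4.** Let `F` be a field with an involution `τ`, and let
`f ∈ F⟨X₀,…,Xₙ,X₀*,…,Xₙ*⟩` (realized as the monoid algebra of the free monoid on
`Fin (n+1) ⊕ Fin (n+1)`, where `inl i` is `Xᵢ` and `inr i` is `Xᵢ*`) be linear in the
last variable `Xₙ`: every word of its support contains the letters `Xₙ`, `Xₙ*` a total
of exactly once.  Then there exist `g, g'` not involving `Xₙ` or `Xₙ*` such that `f` is
cyclically equivalent to `g·Xₙ + Xₙ*·g'`, i.e. the difference is a sum of commutators. -/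
theorem stmt_12 (F : Type*) [Field F] (τ : F →+* F) (hτ : ∀ c, τ (τ c) = c) (n : ℕ)
    (f : MonoidAlgebra F (FreeMonoid (Fin (n + 1) ⊕ Fin (n + 1))))
    (hf : ∀ w ∈ f.coeff.support,
      (FreeMonoid.toList w).count (Sum.inl (Fin.last n)) +
        (FreeMonoid.toList w).count (Sum.inr (Fin.last n)) = 1) :
    ∃ g g' : MonoidAlgebra F (FreeMonoid (Fin (n + 1) ⊕ Fin (n + 1))),
      (∀ w ∈ g.coeff.support, Sum.inl (Fin.last n) ∉ FreeMonoid.toList w ∧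
          Sum.inr (Fin.last n) ∉ FreeMonoid.toList w) ∧
      (∀ w ∈ g'.coeff.support, Sum.inl (Fin.last n) ∉ FreeMonoid.toList w ∧
          Sum.inr (Fin.last n) ∉ FreeMonoid.toList w) ∧
      f - (g * MonoidAlgebra.of F (FreeMonoid (Fin (n + 1) ⊕ Fin (n + 1)))
              (FreeMonoid.of (Sum.inl (Fin.last n))) +
           MonoidAlgebra.of F (FreeMonoid (Fin (n + 1) ⊕ Fin (n + 1)))
              (FreeMonoid.of (Sum.inr (Fin.last n))) * g')
        ∈ AddSubgroup.closure
            {x : MonoidAlgebra F (FreeMonoid (Fin (n + 1) ⊕ Fin (n + 1))) |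
              ∃ p q, x = p * q - q * p} := by
  classical
  induction f using MonoidAlgebra.induction with
  | zero =>
    refine ⟨0, 0, by simp, by simp, ?_⟩
    simp only [zero_mul, mul_zero, add_zero, sub_zero, zero_sub, neg_zero]
    exact zero_mem _
  | single_add w c f' hws hc ih =>
    have hwsup : w ∈ (MonoidAlgebra.single w c + f').coeff.support := by
      rw [Finsupp.mem_support_iff, MonoidAlgebra.coeff_add, MonoidAlgebra.coeff_single, Finsupp.add_apply, Finsupp.single_eq_same,
        Finsupp.notMem_support_iff.mp hws, add_zero]
      exact hc
    obtain ⟨g0, g0', hg0, hg0', hmem0⟩ := single_case F n w c (hf w hwsup)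
    obtain ⟨g1, g1', hg1, hg1', hmem1⟩ := ih (fun w' hw' => by
      apply hf
      rw [Finsupp.mem_support_iff, MonoidAlgebra.coeff_add, MonoidAlgebra.coeff_single, Finsupp.add_apply]
      have hne : w' ≠ w := fun h => hws (h ▸ hw')
      rw [Finsupp.single_eq_of_ne hne]
      simpa using Finsupp.mem_support_iff.mp hw')
    refine ⟨g0 + g1, g0' + g1', ?_, ?_, ?_⟩
    · intro w' hw'
      rcases Finset.mem_union.mp (Finsupp.support_add hw') with h | h
      exacts [hg0 w' h, hg1 w' h]
    · intro w' hw'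
      rcases Finset.mem_union.mp (Finsupp.support_add hw') with h | h
      exacts [hg0' w' h, hg1' w' h]
    · rw [add_mul, mul_add, sub_lemma]
      exact AddSubgroup.add_mem _ hmem0 hmem1
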